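/- Let p ≥ 1, let Θ₀ be a symmetric positive definite p×p real matrix, Ω₀ = Θ₀⁻¹, and cos φ₀ = Tr(Ω₀)/(√p ‖Ω₀‖_F). Then for every symmetric p×p real matrix U with Tr(U) = 0, ( p·Tr((Θ₀U)²) − (Tr(Θ₀U))² ) / (p+2) ≥ (p/(p+2))·cos²φ₀·‖Θ₀^{1/2} U Θ₀^{1/2}‖_F². -/

import Mathlib

open MeasureTheory ProbabilityTheory Matrix

/-- The standard Gaussian measure `N(0, I_p)` on `ℝᵖ`, as the `p`-fold product of
standard normal distributions. -/
noncomputable def stdGaussian (p : ℕ) : Measure (Fin p → ℝ) :=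
  Measure.pi fun _ => gaussianReal 0 1

/-- Euclidean norm of a vector in `ℝᵖ`. -/
noncomputable def euclNorm {p : ℕ} (v : Fin p → ℝ) : ℝ := Real.sqrt (v ⬝ᵥ v)

/-- Frobenius norm of a real matrix. -/
noncomputable def frobNorm {p : ℕ} (A : Matrix (Fin p) (Fin p) ℝ) : ℝ :=
  Real.sqrt (Matrix.trace (Aᵀ * A))

/-- Spectral (L2 operator) norm of a real matrix. -/
noncomputable def specNorm {p : ℕ} (A : Matrix (Fin p) (Fin p) ℝ) : ℝ :=
  sSup {r : ℝ | ∃ v : Fin p → ℝ, euclNorm v = 1 ∧ r = euclNorm (A.mulVec v)}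

/-- Minimal eigenvalue of a symmetric real matrix (via the Rayleigh quotient). -/
noncomputable def lambdaMin {p : ℕ} (A : Matrix (Fin p) (Fin p) ℝ) : ℝ :=
  sInf {r : ℝ | ∃ v : Fin p → ℝ, euclNorm v = 1 ∧ r = v ⬝ᵥ A.mulVec v}

/-- Maximal eigenvalue of a symmetric real matrix (via the Rayleigh quotient). -/
noncomputable def lambdaMax {p : ℕ} (A : Matrix (Fin p) (Fin p) ℝ) : ℝ :=
  sSup {r : ℝ | ∃ v : Fin p → ℝ, euclNorm v = 1 ∧ r = v ⬝ᵥ A.mulVec v}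

/-- Normalization of a vector to the unit sphere: `z ↦ z / ‖z‖`. -/
noncomputable def unitize {p : ℕ} (z : Fin p → ℝ) : Fin p → ℝ := (euclNorm z)⁻¹ • z

/-- `cos φ₀ = Tr Ω / (√p ‖Ω‖_F)`: the cosine of the angle between `Ω` and the identity. -/
noncomputable def cosAngleId {p : ℕ} (Ω : Matrix (Fin p) (Fin p) ℝ) : ℝ :=
  Matrix.trace Ω / (Real.sqrt p * frobNorm Ω)

/-- The square root of a positive semidefinite matrix, as `Matrix.PosSemidef.sqrt` was defined
in the older Mathlib. -/
noncomputable def posSemidefSqrt {p : ℕ} {A : Matrix (Fin p) (Fin p) ℝ} (hA : A.PosSemidef) :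
    Matrix (Fin p) (Fin p) ℝ :=
  hA.1.eigenvectorUnitary.1 * diagonal ((↑) ∘ (√·) ∘ hA.1.eigenvalues) *
  (star hA.1.eigenvectorUnitary : Matrix (Fin p) (Fin p) ℝ)

lemma trace_inner_aux {p : ℕ} (A B : Matrix (Fin p) (Fin p) ℝ) :
    Matrix.trace (Aᵀ * B) = ∑ ij : Fin p × Fin p, A ij.1 ij.2 * B ij.1 ij.2 := by
  rw [Matrix.trace]
  simp only [Matrix.diag_apply, Matrix.mul_apply, Matrix.transpose_apply,
    Fintype.sum_prod_type]
  exact Finset.sum_comm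


set_option maxHeartbeats 1600000 in
/-- For `Θ₀` symmetric positive definite with `Ω₀ = Θ₀⁻¹` and
`cos φ₀ = Tr(Ω₀)/(√p ‖Ω₀‖_F)`, every symmetric `U` with `Tr U = 0` satisfies
`(p·Tr((Θ₀U)²) − (Tr(Θ₀U))²)/(p+2) ≥ (p/(p+2))·cos²φ₀·‖Θ₀^{1/2}UΘ₀^{1/2}‖_F²`. -/
theorem hessian_lower_bound_traceless (p : ℕ) (hp : 1 ≤ p)
    (Θ₀ : Matrix (Fin p) (Fin p) ℝ) (hΘ₀ : Θ₀.PosDef)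
    (U : Matrix (Fin p) (Fin p) ℝ) (hU : U.IsSymm) (htr : Matrix.trace U = 0) :
    ((p : ℝ) * Matrix.trace ((Θ₀ * U) * (Θ₀ * U)) - (Matrix.trace (Θ₀ * U)) ^ 2) / ((p : ℝ) + 2)
      ≥ ((p : ℝ) / ((p : ℝ) + 2)) * (cosAngleId Θ₀⁻¹) ^ 2
          * (frobNorm (posSemidefSqrt hΘ₀.posSemidef * U * posSemidefSqrt hΘ₀.posSemidef)) ^ 2 := by
  set S : Matrix (Fin p) (Fin p) ℝ := posSemidefSqrt hΘ₀.posSemidef with hSdef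
  have hSS : S * S = Θ₀ := by
    have hE : (star hΘ₀.posSemidef.1.eigenvectorUnitary : Matrix (Fin p) (Fin p) ℝ)
        * hΘ₀.posSemidef.1.eigenvectorUnitary.1 = 1 :=
      Unitary.star_mul_self_of_mem hΘ₀.posSemidef.1.eigenvectorUnitary.2
    have hD : diagonal (((↑) : ℝ → ℝ) ∘ (√·) ∘ hΘ₀.posSemidef.1.eigenvalues)
        * diagonal (((↑) : ℝ → ℝ) ∘ (√·) ∘ hΘ₀.posSemidef.1.eigenvalues)
        = diagonal (RCLike.ofReal ∘ hΘ₀.posSemidef.1.eigenvalues) := by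
      rw [diagonal_mul_diagonal]
      congr 1
      funext i
      simp [Real.mul_self_sqrt (hΘ₀.posSemidef.eigenvalues_nonneg i)]
    conv_rhs => rw [hΘ₀.posSemidef.1.spectral_theorem, Unitary.conjStarAlgAut_apply]
    rw [hSdef, posSemidefSqrt]
    calc _ = hΘ₀.posSemidef.1.eigenvectorUnitary.1
          * diagonal (((↑) : ℝ → ℝ) ∘ (√·) ∘ hΘ₀.posSemidef.1.eigenvalues)
          * ((star hΘ₀.posSemidef.1.eigenvectorUnitary : Matrix (Fin p) (Fin p) ℝ)
            * hΘ₀.posSemidef.1.eigenvectorUnitary.1)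
          * diagonal (((↑) : ℝ → ℝ) ∘ (√·) ∘ hΘ₀.posSemidef.1.eigenvalues)
          * (star hΘ₀.posSemidef.1.eigenvectorUnitary : Matrix (Fin p) (Fin p) ℝ) := by
            simp only [Matrix.mul_assoc]
      _ = _ := by
            rw [hE, Matrix.mul_one, Matrix.mul_assoc _ (diagonal _) (diagonal _), hD]
  have hSherm : S.IsHermitian := by
    rw [hSdef, posSemidefSqrt, IsHermitian, conjTranspose_mul, conjTranspose_mul,
      diagonal_conjTranspose]
    simp [Matrix.mul_assoc, Matrix.star_eq_conjTranspose]
  have hST : Sᵀ = S := by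
    ext i j; simpa using hSherm.apply i j
  set V : Matrix (Fin p) (Fin p) ℝ := S * U * S with hVdef
  have hUT : Uᵀ = U := hU
  have hVT : Vᵀ = V := by
    rw [hVdef, Matrix.transpose_mul, Matrix.transpose_mul, hST, hUT, Matrix.mul_assoc]
  set Ω : Matrix (Fin p) (Fin p) ℝ := Θ₀⁻¹ with hΩdef
  have hΩpd : Ω.PosDef := hΘ₀.inv
  have hΩT : Ωᵀ = Ω := by
    ext i j; simpa using hΩpd.1.apply i j
  -- invertibility facts
  have hdet : IsUnit Θ₀.det := isUnit_iff_ne_zero.2 (ne_of_gt hΘ₀.det_pos)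
  have hinv : Θ₀ * Ω = 1 := Matrix.mul_nonsing_inv _ hdet
  have hinv' : Ω * Θ₀ = 1 := Matrix.nonsing_inv_mul _ hdet
  have hSΘ : S * Θ₀ = Θ₀ * S := by
    rw [← hSS, Matrix.mul_assoc]
  have hcomm : Ω * S = S * Ω := by
    calc Ω * S = Ω * S * (Θ₀ * Ω) := by rw [hinv, Matrix.mul_one]
      _ = Ω * (S * Θ₀) * Ω := by simp only [Matrix.mul_assoc]
      _ = Ω * Θ₀ * S * Ω := by rw [hSΘ]; simp only [Matrix.mul_assoc]
      _ = S * Ω := by rw [hinv', Matrix.one_mul]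
  have hSΩS : S * Ω * S = 1 := by
    calc S * Ω * S = S * (Ω * S) := by rw [Matrix.mul_assoc]
      _ = S * (S * Ω) := by rw [hcomm]
      _ = S * S * Ω := by rw [Matrix.mul_assoc]
      _ = 1 := by rw [hSS, hinv]
  -- trace identities
  have h1 : Matrix.trace ((Θ₀ * U) * (Θ₀ * U)) = Matrix.trace (V * V) := by
    rw [hVdef, ← hSS]
    have h := Matrix.trace_mul_comm S (S * U * S * S * U)
    simp only [Matrix.mul_assoc] at h ⊢
    exact h
  have h2 : Matrix.trace (Θ₀ * U) = Matrix.trace V := by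
    rw [hVdef, ← hSS]
    have h := Matrix.trace_mul_comm S (S * U)
    simp only [Matrix.mul_assoc] at h ⊢
    exact h
  have hΩV : Matrix.trace (Ω * V) = 0 := by
    have h : Matrix.trace (Ω * V) = Matrix.trace (S * Ω * S * U) := by
      rw [hVdef]
      have h := Matrix.trace_mul_comm (Ω * (S * U)) S
      simp only [Matrix.mul_assoc] at h ⊢
      exact h
    rw [h, hSΩS, Matrix.one_mul, htr]
  -- scalar quantities
  set t : ℝ := Matrix.trace Ω with htdef
  set tv : ℝ := Matrix.trace V with htvdef
  set a : ℝ := ∑ ij : Fin p × Fin p, Ω ij.1 ij.2 * Ω ij.1 ij.2 with hadef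
  set n : ℝ := ∑ ij : Fin p × Fin p, V ij.1 ij.2 * V ij.1 ij.2 with hndef
  have hΩΩ : Matrix.trace (Ωᵀ * Ω) = a := trace_inner_aux Ω Ω
  have hVVtr : Matrix.trace (V * V) = n := by
    nth_rewrite 1 [← hVT]
    rw [trace_inner_aux, hndef]
  have hIV : ∑ ij : Fin p × Fin p, (1 : Matrix (Fin p) (Fin p) ℝ) ij.1 ij.2 * V ij.1 ij.2 = tv := by
    rw [← trace_inner_aux, Matrix.transpose_one, Matrix.one_mul]
  have hΩVsum : ∑ ij : Fin p × Fin p, Ω ij.1 ij.2 * V ij.1 ij.2 = 0 := by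
    rw [← trace_inner_aux, hΩT, hΩV]
  have hII : ∑ ij : Fin p × Fin p, (1 : Matrix (Fin p) (Fin p) ℝ) ij.1 ij.2
      * (1 : Matrix (Fin p) (Fin p) ℝ) ij.1 ij.2 = (p : ℝ) := by
    rw [← trace_inner_aux, Matrix.transpose_one, Matrix.one_mul, Matrix.trace_one]
    simp
  have hIΩ : ∑ ij : Fin p × Fin p, (1 : Matrix (Fin p) (Fin p) ℝ) ij.1 ij.2 * Ω ij.1 ij.2 = t := by
    rw [← trace_inner_aux, Matrix.transpose_one, Matrix.one_mul]
  -- positivity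
  have ht_pos : 0 < t := by
    rw [htdef, Matrix.trace]
    apply Finset.sum_pos
    · intro i _
      have hne : (Pi.single i 1 : Fin p → ℝ) ≠ 0 := by
        intro h
        have := congrFun h i
        simp at this
      exact hΩpd.diag_pos
    · have : Nonempty (Fin p) := ⟨⟨0, hp⟩⟩
      exact Finset.univ_nonempty
  have ha_nonneg : 0 ≤ a := Finset.sum_nonneg fun ij _ => mul_self_nonneg _
  have hn_nonneg : 0 ≤ n := Finset.sum_nonneg fun ij _ => mul_self_nonneg _
  have ha_pos : 0 < a := by
    rcases ha_nonneg.lt_or_eq with h | h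
    · exact h
    · exfalso
      have hzero : ∀ ij : Fin p × Fin p, Ω ij.1 ij.2 * Ω ij.1 ij.2 = 0 := by
        intro ij
        have := (Finset.sum_eq_zero_iff_of_nonneg (fun ij _ => mul_self_nonneg (Ω ij.1 ij.2))).1
          h.symm ij (Finset.mem_univ _)
        exact this
      have hΩ0 : Ω = 0 := by
        ext i j
        have := hzero (i, j)
        exact mul_self_eq_zero.1 this
      rw [htdef, hΩ0] at ht_pos
      simp at ht_pos
  have hp_pos : (0 : ℝ) < p := by exact_mod_cast hp
  -- Cauchy-Schwarz
  set c : ℝ := t / a with hcdef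
  have hCS := Finset.sum_mul_sq_le_sq_mul_sq Finset.univ
    (fun ij : Fin p × Fin p => (1 : Matrix (Fin p) (Fin p) ℝ) ij.1 ij.2 - c * Ω ij.1 ij.2)
    (fun ij : Fin p × Fin p => V ij.1 ij.2)
  have hfg : ∑ ij : Fin p × Fin p,
      ((1 : Matrix (Fin p) (Fin p) ℝ) ij.1 ij.2 - c * Ω ij.1 ij.2) * V ij.1 ij.2 = tv := by
    have : ∀ ij : Fin p × Fin p,
        ((1 : Matrix (Fin p) (Fin p) ℝ) ij.1 ij.2 - c * Ω ij.1 ij.2) * V ij.1 ij.2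
          = (1 : Matrix (Fin p) (Fin p) ℝ) ij.1 ij.2 * V ij.1 ij.2
            - c * (Ω ij.1 ij.2 * V ij.1 ij.2) := fun ij => by ring
    rw [Finset.sum_congr rfl fun ij _ => this ij, Finset.sum_sub_distrib, ← Finset.mul_sum,
      hIV, hΩVsum, mul_zero, sub_zero]
  have hff : ∑ ij : Fin p × Fin p,
      ((1 : Matrix (Fin p) (Fin p) ℝ) ij.1 ij.2 - c * Ω ij.1 ij.2) ^ 2
        = (p : ℝ) - t ^ 2 / a := by
    have expand : ∀ ij : Fin p × Fin p,
        ((1 : Matrix (Fin p) (Fin p) ℝ) ij.1 ij.2 - c * Ω ij.1 ij.2) ^ 2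
          = (1 : Matrix (Fin p) (Fin p) ℝ) ij.1 ij.2 * (1 : Matrix (Fin p) (Fin p) ℝ) ij.1 ij.2
            - (2 * c) * ((1 : Matrix (Fin p) (Fin p) ℝ) ij.1 ij.2 * Ω ij.1 ij.2)
            + c ^ 2 * (Ω ij.1 ij.2 * Ω ij.1 ij.2) := fun ij => by ring
    rw [Finset.sum_congr rfl fun ij _ => expand ij, Finset.sum_add_distrib,
      Finset.sum_sub_distrib, ← Finset.mul_sum, ← Finset.mul_sum, hII, hIΩ]
    rw [hcdef]
    field_simp
    have ha2 : ∑ x : Fin p × Fin p, Ω x.1 x.2 ^ 2 = a := by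
      rw [hadef]; exact Finset.sum_congr rfl fun _ _ => pow_two _
    rw [ha2]
    ring
  have hgg : ∑ ij : Fin p × Fin p, (V ij.1 ij.2) ^ 2 = n := by
    rw [hndef]
    exact Finset.sum_congr rfl fun ij _ => pow_two _
  have hkey : tv ^ 2 ≤ ((p : ℝ) - t ^ 2 / a) * n := by
    rw [← hfg, ← hff, ← hgg]
    exact hCS
  -- frobenius norms
  have hfrobΩ : frobNorm Ω = Real.sqrt a := by rw [frobNorm, hΩΩ]
  have hfrobV : (frobNorm V) ^ 2 = n := by
    rw [frobNorm, hVT, hVVtr, Real.sq_sqrt hn_nonneg]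
  have hcos2 : (cosAngleId Ω) ^ 2 = t ^ 2 / ((p : ℝ) * a) := by
    rw [cosAngleId, hfrobΩ, ← htdef, div_pow, mul_pow, Real.sq_sqrt hp_pos.le,
      Real.sq_sqrt ha_nonneg]
  rw [ge_iff_le, h1, h2, hVVtr, hfrobV, hcos2]
  have hp2 : (0 : ℝ) < (p : ℝ) + 2 := by linarith
  have hring : ((p : ℝ) - t ^ 2 / a) * n = (p : ℝ) * n - t ^ 2 * n / a := by ring
  rw [hring] at hkey
  have hRHS : (p : ℝ) / ((p : ℝ) + 2) * (t ^ 2 / ((p : ℝ) * a)) * n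
      = (t ^ 2 * n / a) / ((p : ℝ) + 2) := by
    field_simp
  rw [hRHS, div_le_div_iff_of_pos_right hp2]
  linarith [hkey]
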